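/- arXiv:2010.10060 — 3 statements merged into one kernel-verified Lean document; each statement's English description precedes it below -/
import Mathlib

section
/- The number of barred Callan sequences of size k × n equals the C-poly-Bernoulli number C_n^{(-k-1)}. -/
open Finset

/-- Stirling numbers of the second kind. -/
def stirling2 : ℕ → ℕ → ℕ
  | 0, 0 => 1
  | 0, _ + 1 => 0
  | _ + 1, 0 => 0
  | n + 1, j + 1 => (j + 1) * stirling2 n (j + 1) + stirling2 n j

/-- Genocchi numbers, via `G n = 2 (1 - 2^n) B n`. -/
def genocchi (n : ℕ) : ℚ := 2 * (1 - 2 ^ n) * bernoulli n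
/-- Blue base set for a `k × n` Callan sequence: `{1, …, k} ∪ {*}`. -/
abbrev Blue (k : ℕ) := Fin k ⊕ Unit

/-- Red base set for a `k × n` Callan sequence: `{1, …, n} ∪ {*}`. -/
abbrev Red (n : ℕ) := Fin n ⊕ Unit

/-- A Callan pair: a blue block together with a red block. -/
abbrev CPair (k n : ℕ) := Finset (Blue k) × Finset (Red n)

/-- A Callan sequence of size `k × n`: a sequence of Callan pairs whose blue (resp. red)
blocks form an ordered partition of the blue (resp. red) base set into nonempty blocks,
with both starred elements in the last (extra) pair. -/
structure CallanSeq (k n : ℕ) where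
  pairs : List (CPair k n)
  ne : pairs ≠ []
  blue_nonempty : ∀ p ∈ pairs, p.1.Nonempty
  red_nonempty : ∀ p ∈ pairs, p.2.Nonempty
  blue_partition : ∀ b : Blue k, ∃! i : Fin pairs.length, b ∈ (pairs.get i).1
  red_partition : ∀ r : Red n, ∃! i : Fin pairs.length, r ∈ (pairs.get i).2
  star_blue : (Sum.inr () : Blue k) ∈ (pairs.getLast ne).1
  star_red : (Sum.inr () : Red n) ∈ (pairs.getLast ne).2

/-- A barred Callan sequence: a Callan sequence with one bar inserted at any position
except the very end, i.e. immediately before one of the pairs. -/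
def BarredCallan (k n : ℕ) := Σ σ : CallanSeq k n, Fin σ.pairs.length
/-- `C`-poly-Bernoulli numbers with negative upper index: `cPolyBernoulli n k = C_n^{(-k-1)}`. -/
def cPolyBernoulli (n k : ℕ) : ℕ :=
  ∑ m ∈ Finset.range (min n k + 1),
    m.factorial * (m + 1).factorial * stirling2 (n + 1) (m + 1) * stirling2 (k + 1) (m + 1)

open Function

noncomputable def surjSnocEquiv (N : ℕ) (β : Type) :
    {f : Fin (N+1) → β // Surjective f} ≃
      (β × {g : Fin N → β // Surjective g}) ⊕ (Σ v : β, {g : Fin N → β // Set.range g = {v}ᶜ}) := by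
  classical
  refine
  { toFun := fun f =>
      if h : Surjective (f.1 ∘ Fin.castSucc) then Sum.inl (f.1 (Fin.last N), ⟨_, h⟩)
      else Sum.inr ⟨f.1 (Fin.last N), f.1 ∘ Fin.castSucc, ?_⟩
    invFun := fun x => match x with
      | Sum.inl (v, g) => ⟨Fin.snoc g.1 v, ?_⟩
      | Sum.inr ⟨v, g⟩ => ⟨Fin.snoc g.1 v, ?_⟩
    left_inv := ?_
    right_inv := ?_ }
  · -- range = {v}ᶜ
    ext y
    simp only [Set.mem_range, Set.mem_compl_iff, Set.mem_singleton_iff]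
    constructor
    · rintro ⟨x, rfl⟩ hy
      apply h
      intro z
      rcases f.2 z with ⟨w, rfl⟩
      rcases Fin.eq_castSucc_or_eq_last w with ⟨i, rfl⟩ | rfl
      · exact ⟨i, rfl⟩
      · exact ⟨x, hy⟩
    · intro hy
      rcases f.2 y with ⟨w, hw⟩
      rcases Fin.eq_castSucc_or_eq_last w with ⟨i, rfl⟩ | rfl
      · exact ⟨i, hw⟩
      · exact absurd hw.symm hy
  · -- snoc of surjective g is surjective
    intro y; rcases g.2 y with ⟨x, hx⟩
    exact ⟨Fin.castSucc x, by simpa using hx⟩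
  · intro y
    by_cases hy : y = v
    · exact ⟨Fin.last N, by simpa using hy.symm⟩
    · have : y ∈ Set.range g.1 := by rw [g.2]; simpa using hy
      rcases this with ⟨x, hx⟩
      exact ⟨Fin.castSucc x, by simpa using hx⟩
  · rintro ⟨f, hf⟩
    by_cases h : Surjective (f ∘ Fin.castSucc)
    · dsimp only
      rw [dif_pos h]
      apply Subtype.ext
      funext i
      exact Fin.lastCases (by simp) (fun j => by simp) i
    · dsimp only
      rw [dif_neg h]
      apply Subtype.ext
      funext i
      exact Fin.lastCases (by simp) (fun j => by simp) i
  · rintro (⟨v, g, hg⟩ | ⟨v, g, hg⟩) <;>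
    · have h1 : (Fin.snoc (α := fun _ => β) g v ∘ Fin.castSucc) = g := by
        funext i; simp
      simp only [h1]
      first
      | (rw [dif_pos hg]; simp)
      | (have h : ¬ Surjective g := by
           intro hs
           have : v ∈ Set.range g := hs.range_eq ▸ Set.mem_univ v
           rw [hg] at this; simp at this
         rw [dif_neg h]
         refine congrArg Sum.inr (Sigma.ext (by simp) ?_)
         rw [Subtype.heq_iff_coe_eq]
         intro x
         simp)

noncomputable def rangeComplEquiv (N : ℕ) (β : Type) (v : β) :
    {g : Fin N → β // Set.range g = {v}ᶜ} ≃
      {h : Fin N → ({v}ᶜ : Set β) // Surjective h} where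
  toFun g := ⟨fun x => ⟨g.1 x, by have := Set.mem_range_self (f := g.1) x; rwa [g.2] at this⟩, by
    rintro ⟨y, hy⟩
    have : y ∈ Set.range g.1 := by rw [g.2]; exact hy
    rcases this with ⟨x, hx⟩
    exact ⟨x, Subtype.ext hx⟩⟩
  invFun h := ⟨fun x => (h.1 x : β), by
    ext y
    simp only [Set.mem_range, Set.mem_compl_iff, Set.mem_singleton_iff]
    constructor
    · rintro ⟨x, rfl⟩
      exact (h.1 x).2
    · intro hy
      rcases h.2 ⟨y, hy⟩ with ⟨x, hx⟩
      exact ⟨x, congrArg Subtype.val hx⟩⟩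
  left_inv g := Subtype.ext rfl
  right_inv h := Subtype.ext (funext fun x => Subtype.ext rfl)

noncomputable def surjArrowCongr {α α' β : Type} (e : α ≃ α') :
    {f : α → β // Surjective f} ≃ {f : α' → β // Surjective f} where
  toFun f := ⟨f.1 ∘ e.symm, f.2.comp e.symm.surjective⟩
  invFun f := ⟨f.1 ∘ e, f.2.comp e.surjective⟩
  left_inv f := Subtype.ext (by funext x; simp)
  right_inv f := Subtype.ext (by funext x; simp)

lemma natCard_sigma {ι : Type*} [Fintype ι] (F : ι → Type*) [∀ i, Finite (F i)] :
    Nat.card (Σ i, F i) = ∑ i, Nat.card (F i) := by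
  letI : ∀ i, Fintype (F i) := fun i => Fintype.ofFinite (F i)
  simp [Nat.card_eq_fintype_card]

lemma card_surjections (N : ℕ) (β : Type) [Fintype β] :
    Nat.card {f : Fin N → β // Surjective f} =
      (Fintype.card β).factorial * stirling2 N (Fintype.card β) := by
  classical
  induction N generalizing β with
  | zero =>
    rcases isEmpty_or_nonempty β with hβ | hβ
    · have h0 : Fintype.card β = 0 := Fintype.card_eq_zero
      rw [h0]
      have : Nat.card {f : Fin 0 → β // Surjective f} = 1 := by
        rw [Nat.card_eq_one_iff_unique]
        constructor
        · constructor
          rintro ⟨f, hf⟩ ⟨g, hg⟩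
          exact Subtype.ext (funext fun x => x.elim0)
        · exact ⟨⟨fun x => x.elim0, fun b => (IsEmpty.false b).elim⟩⟩
      rw [this]; rfl
    · obtain ⟨c, hc⟩ : ∃ c, Fintype.card β = c + 1 :=
        ⟨Fintype.card β - 1, (Nat.succ_pred_eq_of_pos Fintype.card_pos).symm⟩
      rw [hc]
      have : IsEmpty {f : Fin 0 → β // Surjective f} := by
        constructor
        rintro ⟨f, hf⟩
        rcases hf (Classical.arbitrary β) with ⟨x, _⟩
        exact x.elim0
      rw [Nat.card_of_isEmpty]
      simp [stirling2]
  | succ N ih =>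
    rcases isEmpty_or_nonempty β with hβ | hβ
    · have h0 : Fintype.card β = 0 := Fintype.card_eq_zero
      have : IsEmpty {f : Fin (N+1) → β // Surjective f} := by
        constructor
        rintro ⟨f, hf⟩
        exact IsEmpty.false (f 0)
      rw [Nat.card_of_isEmpty, h0]
      simp [stirling2]
    · obtain ⟨c, hc⟩ : ∃ c, Fintype.card β = c + 1 :=
        ⟨Fintype.card β - 1, (Nat.succ_pred_eq_of_pos Fintype.card_pos).symm⟩
    -- key computation
      have hcompl : ∀ v : β, Fintype.card ({v}ᶜ : Set β) = c := by
        intro v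
        rw [Fintype.card_compl_set, Set.card_singleton, hc]; rfl
      have key := Nat.card_congr (surjSnocEquiv N β)
      rw [Nat.card_sum, Nat.card_prod, natCard_sigma] at key
      have hfib : ∀ v : β, Nat.card {g : Fin N → β // Set.range g = {v}ᶜ} =
          c.factorial * stirling2 N c := by
        intro v
        rw [Nat.card_congr (rangeComplEquiv N β v), ih, hcompl v]
      simp only [hfib, Finset.sum_const, Finset.card_univ, smul_eq_mul] at key
      rw [key, ih, Nat.card_eq_fintype_card, hc]
      show (c+1) * ((c+1).factorial * stirling2 N (c+1)) + (c+1) * (c.factorial * stirling2 N c)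
        = (c+1).factorial * stirling2 (N+1) (c+1)
      rw [show stirling2 (N+1) (c+1) = (c + 1) * stirling2 N (c + 1) + stirling2 N c from rfl]
      rw [Nat.factorial_succ]
      ring

noncomputable def sliceEquiv {α : Type} (star : α) {j : ℕ} (v w : Fin (j+1)) :
    {f : α → Fin (j+1) // Surjective f ∧ f star = v} ≃
      {f : α → Fin (j+1) // Surjective f ∧ f star = w} where
  toFun f := ⟨(Equiv.swap v w) ∘ f.1,
    ⟨(Equiv.swap v w).surjective.comp f.2.1, by simp [f.2.2]⟩⟩
  invFun f := ⟨(Equiv.swap v w) ∘ f.1,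
    ⟨(Equiv.swap v w).surjective.comp f.2.1, by simp [f.2.2]⟩⟩
  left_inv f := Subtype.ext (by funext x; simp)
  right_inv f := Subtype.ext (by funext x; simp)

lemma card_slice (α : Type) [Fintype α] (star : α) (j : ℕ) :
    Nat.card {f : α → Fin (j+1) // Surjective f ∧ f star = Fin.last j} =
      j.factorial * stirling2 (Fintype.card α) (j+1) := by
  classical
  have htot : Nat.card {f : α → Fin (j+1) // Surjective f} =
      (j+1).factorial * stirling2 (Fintype.card α) (j+1) := by
    rw [Nat.card_congr (surjArrowCongr (β := Fin (j+1)) (Fintype.equivFin α)),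
      card_surjections, Fintype.card_fin]
  have hdec : Nat.card {f : α → Fin (j+1) // Surjective f} =
      ∑ v : Fin (j+1), Nat.card {f : α → Fin (j+1) // Surjective f ∧ f star = v} := by
    rw [← Nat.card_congr (Equiv.sigmaFiberEquiv (fun F : {f : α → Fin (j+1) // Surjective f} => F.1 star)),
      natCard_sigma]
    congr 1
    funext v
    exact Nat.card_congr (Equiv.subtypeSubtypeEquivSubtypeInter (fun f : α → Fin (j+1) => Surjective f) (fun f => f star = v))
  have hconst : ∀ v : Fin (j+1),
      Nat.card {f : α → Fin (j+1) // Surjective f ∧ f star = v} =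
        Nat.card {f : α → Fin (j+1) // Surjective f ∧ f star = Fin.last j} :=
    fun v => Nat.card_congr (sliceEquiv star v (Fin.last j))
  simp only [hconst, Finset.sum_const, Finset.card_univ, Fintype.card_fin, smul_eq_mul] at hdec
  rw [htot] at hdec
  have := hdec.symm
  rw [Nat.factorial_succ, mul_assoc] at this
  exact Nat.eq_of_mul_eq_mul_left (Nat.succ_pos j) this

/- ### auxiliary -/

section Callan

variable {k n : ℕ}

lemma CallanSeq.ext' {σ τ : CallanSeq k n} (h : σ.pairs = τ.pairs) : σ = τ := by
  cases σ; cases τ; subst h; rfl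

lemma CallanSeq.length_pos (σ : CallanSeq k n) : 0 < σ.pairs.length :=
  List.length_pos_iff.2 σ.ne

noncomputable def CallanSeq.bIdx (σ : CallanSeq k n) (b : Blue k) : Fin σ.pairs.length :=
  (σ.blue_partition b).exists.choose

lemma CallanSeq.bIdx_mem (σ : CallanSeq k n) (b : Blue k) :
    b ∈ (σ.pairs.get (σ.bIdx b)).1 :=
  (σ.blue_partition b).exists.choose_spec

lemma CallanSeq.bIdx_eq (σ : CallanSeq k n) {b : Blue k} {i : Fin σ.pairs.length}
    (h : b ∈ (σ.pairs.get i).1) : σ.bIdx b = i :=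
  (σ.blue_partition b).unique (σ.bIdx_mem b) h

noncomputable def CallanSeq.rIdx (σ : CallanSeq k n) (r : Red n) : Fin σ.pairs.length :=
  (σ.red_partition r).exists.choose

lemma CallanSeq.rIdx_mem (σ : CallanSeq k n) (r : Red n) :
    r ∈ (σ.pairs.get (σ.rIdx r)).2 :=
  (σ.red_partition r).exists.choose_spec

lemma CallanSeq.rIdx_eq (σ : CallanSeq k n) {r : Red n} {i : Fin σ.pairs.length}
    (h : r ∈ (σ.pairs.get i).2) : σ.rIdx r = i :=
  (σ.red_partition r).unique (σ.rIdx_mem r) h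

lemma CallanSeq.bIdx_surj (σ : CallanSeq k n) : Surjective σ.bIdx := by
  intro i
  obtain ⟨b, hb⟩ := σ.blue_nonempty _ (σ.pairs.get_mem i)
  exact ⟨b, σ.bIdx_eq hb⟩

lemma CallanSeq.rIdx_surj (σ : CallanSeq k n) : Surjective σ.rIdx := by
  intro i
  obtain ⟨r, hr⟩ := σ.red_nonempty _ (σ.pairs.get_mem i)
  exact ⟨r, σ.rIdx_eq hr⟩

lemma CallanSeq.getLast_eq (σ : CallanSeq k n) :
    σ.pairs.getLast σ.ne = σ.pairs.get ⟨σ.pairs.length - 1, by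
      have := σ.length_pos; omega⟩ := by
  rw [List.getLast_eq_getElem]; simp [List.get_eq_getElem]

lemma CallanSeq.bIdx_star (σ : CallanSeq k n) :
    σ.bIdx (Sum.inr ()) = ⟨σ.pairs.length - 1, by have := σ.length_pos; omega⟩ :=
  σ.bIdx_eq (by rw [← σ.getLast_eq]; exact σ.star_blue)

lemma CallanSeq.rIdx_star (σ : CallanSeq k n) :
    σ.rIdx (Sum.inr ()) = ⟨σ.pairs.length - 1, by have := σ.length_pos; omega⟩ :=
  σ.rIdx_eq (by rw [← σ.getLast_eq]; exact σ.star_red)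

lemma CallanSeq.length_le_blue (σ : CallanSeq k n) : σ.pairs.length ≤ k + 1 := by
  classical
  have pick : ∀ i : Fin σ.pairs.length, {b : Blue k // b ∈ (σ.pairs.get i).1} := by
    intro i
    exact ⟨(σ.blue_nonempty _ (σ.pairs.get_mem i)).choose,
      (σ.blue_nonempty _ (σ.pairs.get_mem i)).choose_spec⟩
  have hinj : Injective (fun i => (pick i).1) := by
    intro i j hij
    have hi : σ.bIdx (pick i).1 = i := σ.bIdx_eq (pick i).2
    have hj : σ.bIdx (pick j).1 = j := σ.bIdx_eq (pick j).2
    have h3 := congrArg σ.bIdx hij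
    rw [hi, hj] at h3
    exact h3
  calc σ.pairs.length = Fintype.card (Fin σ.pairs.length) := (Fintype.card_fin _).symm
    _ ≤ Fintype.card (Blue k) := Fintype.card_le_of_injective _ hinj
    _ = k + 1 := by simp

lemma CallanSeq.length_le_red (σ : CallanSeq k n) : σ.pairs.length ≤ n + 1 := by
  classical
  have pick : ∀ i : Fin σ.pairs.length, {r : Red n // r ∈ (σ.pairs.get i).2} := by
    intro i
    exact ⟨(σ.red_nonempty _ (σ.pairs.get_mem i)).choose,
      (σ.red_nonempty _ (σ.pairs.get_mem i)).choose_spec⟩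
  have hinj : Injective (fun i => (pick i).1) := by
    intro i j hij
    have hi : σ.rIdx (pick i).1 = i := σ.rIdx_eq (pick i).2
    have hj : σ.rIdx (pick j).1 = j := σ.rIdx_eq (pick j).2
    have h3 := congrArg σ.rIdx hij
    rw [hi, hj] at h3
    exact h3
  calc σ.pairs.length = Fintype.card (Fin σ.pairs.length) := (Fintype.card_fin _).symm
    _ ≤ Fintype.card (Red n) := Fintype.card_le_of_injective _ hinj
    _ = n + 1 := by simp

/-- The slice type: surjections with prescribed last value at the star. -/
def Slice (α : Type) (star : α) (m : ℕ) : Type :=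
  {f : α → Fin (m+1) // Surjective f ∧ f star = Fin.last m}

/-- Data describing a Callan sequence. -/
def CData (k n : ℕ) : Type :=
  Σ m : Fin (min n k + 1),
    Slice (Blue k) (Sum.inr ()) m.1 × Slice (Red n) (Sum.inr ()) m.1

instance (α : Type) [Finite α] (star : α) (m : ℕ) : Finite (Slice α star m) := by
  unfold Slice; infer_instance

instance : Finite (CData k n) := by
  unfold CData; infer_instance

noncomputable def toData (σ : CallanSeq k n) : CData k n := by
  have hlen : σ.pairs.length = (σ.pairs.length - 1) + 1 :=
    (Nat.succ_pred_eq_of_pos σ.length_pos).symm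
  refine ⟨⟨σ.pairs.length - 1, by
      have h1 := σ.length_le_blue; have h2 := σ.length_le_red; omega⟩,
    ⟨fun b => Fin.cast hlen (σ.bIdx b), ?_, ?_⟩,
    ⟨fun r => Fin.cast hlen (σ.rIdx r), ?_, ?_⟩⟩
  · intro i
    obtain ⟨b, hb⟩ := σ.bIdx_surj (Fin.cast hlen.symm i)
    exact ⟨b, by simp [hb]⟩
  · apply Fin.ext
    simp [σ.bIdx_star, Fin.last]
  · intro i
    obtain ⟨r, hr⟩ := σ.rIdx_surj (Fin.cast hlen.symm i)
    exact ⟨r, by simp [hr]⟩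
  · apply Fin.ext
    simp [σ.rIdx_star, Fin.last]

noncomputable def ofData (x : CData k n) : CallanSeq k n := by
  classical
  refine
  { pairs := List.ofFn (fun i : Fin (x.1.1 + 1) =>
      (Finset.univ.filter (fun b => x.2.1.1 b = i),
       Finset.univ.filter (fun r => x.2.2.1 r = i)))
    ne := ?_
    blue_nonempty := ?_
    red_nonempty := ?_
    blue_partition := ?_
    red_partition := ?_
    star_blue := ?_
    star_red := ?_ }
  · intro h
    have := congrArg List.length h
    simp at this
  · rintro p hp
    rw [List.mem_ofFn] at hp
    obtain ⟨i, rfl⟩ := hp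
    obtain ⟨b, hb⟩ := x.2.1.2.1 i
    exact ⟨b, by simp [hb]⟩
  · rintro p hp
    rw [List.mem_ofFn] at hp
    obtain ⟨i, rfl⟩ := hp
    obtain ⟨r, hr⟩ := x.2.2.2.1 i
    exact ⟨r, by simp [hr]⟩
  · intro b
    refine ⟨⟨(x.2.1.1 b).1, by simpa using (x.2.1.1 b).2⟩, ?_, ?_⟩
    · simp only [List.get_ofFn]
      simp only [Finset.mem_filter, Finset.mem_univ, true_and]
      apply Fin.ext
      simp
    · intro j hj
      simp only [List.get_ofFn] at hj
      simp only [Finset.mem_filter, Finset.mem_univ, true_and] at hj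
      apply Fin.ext
      have := congrArg Fin.val hj
      simpa using this.symm
  · intro r
    refine ⟨⟨(x.2.2.1 r).1, by simpa using (x.2.2.1 r).2⟩, ?_, ?_⟩
    · simp only [List.get_ofFn]
      simp only [Finset.mem_filter, Finset.mem_univ, true_and]
      apply Fin.ext
      simp
    · intro j hj
      simp only [List.get_ofFn] at hj
      simp only [Finset.mem_filter, Finset.mem_univ, true_and] at hj
      apply Fin.ext
      have := congrArg Fin.val hj
      simpa using this.symm
  · rw [List.getLast_eq_getElem, List.getElem_ofFn]
    simp only [Finset.mem_filter, Finset.mem_univ, true_and]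
    rw [x.2.1.2.2]
    apply Fin.ext
    simp [Fin.last]
  · rw [List.getLast_eq_getElem, List.getElem_ofFn]
    simp only [Finset.mem_filter, Finset.mem_univ, true_and]
    rw [x.2.2.2.2]
    apply Fin.ext
    simp [Fin.last]

lemma ofData_toData (σ : CallanSeq k n) : ofData (toData σ) = σ := by
  classical
  apply CallanSeq.ext'
  apply List.ext_get
  · have := σ.length_pos
    simp only [ofData, List.length_ofFn, toData]
    omega
  · intro t h₁ h₂
    simp only [ofData, List.get_ofFn, toData]
    refine Prod.ext ?_ ?_
    · apply Finset.ext
      intro b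
      simp only [Finset.mem_filter, Finset.mem_univ, true_and]
      constructor
      · intro hb
        have hv := congrArg Fin.val hb
        simp at hv
        have hbi : σ.bIdx b = ⟨t, h₂⟩ := Fin.ext (by simpa using hv)
        rw [← hbi]
        exact σ.bIdx_mem b
      · intro hb
        have h3 := σ.bIdx_eq (i := ⟨t, h₂⟩) hb
        apply Fin.ext
        simp [h3]
    · apply Finset.ext
      intro r
      simp only [Finset.mem_filter, Finset.mem_univ, true_and]
      constructor
      · intro hr
        have hv := congrArg Fin.val hr
        simp at hv
        have hri : σ.rIdx r = ⟨t, h₂⟩ := Fin.ext (by simpa using hv)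
        rw [← hri]
        exact σ.rIdx_mem r
      · intro hr
        have h3 := σ.rIdx_eq (i := ⟨t, h₂⟩) hr
        apply Fin.ext
        simp [h3]

lemma ofData_injective : Injective (ofData (k := k) (n := n)) := by
  classical
  rintro ⟨m, p⟩ ⟨m', p'⟩ h
  have hL := congrArg CallanSeq.pairs h
  simp only [ofData] at hL
  have hlen := congrArg List.length hL
  simp only [List.length_ofFn] at hlen
  have hm : m = m' := Fin.ext (by omega)
  subst hm
  obtain ⟨⟨f, hf⟩, ⟨g, hg⟩⟩ := p
  obtain ⟨⟨f', hf'⟩, ⟨g', hg'⟩⟩ := p'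
  have hfib : ∀ i : Fin (m.1 + 1),
      ((Finset.univ.filter (fun b => f b = i), Finset.univ.filter (fun r => g r = i)) : CPair k n)
      = (Finset.univ.filter (fun b => f' b = i), Finset.univ.filter (fun r => g' r = i)) := by
    intro i
    have h1 : (List.ofFn (fun i : Fin (m.1 + 1) =>
        ((Finset.univ.filter (fun b => f b = i), Finset.univ.filter (fun r => g r = i)) : CPair k n)))[i.1]'(by simp; exact Nat.le_of_lt_succ i.2) =
        (List.ofFn (fun i : Fin (m.1 + 1) =>
        ((Finset.univ.filter (fun b => f' b = i), Finset.univ.filter (fun r => g' r = i)) : CPair k n)))[i.1]'(by simp; exact Nat.le_of_lt_succ i.2) := by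
      simp only [hL]
    rw [List.getElem_ofFn, List.getElem_ofFn] at h1
    simpa using h1
  have hff : f = f' := by
    funext b
    have h1 := congrArg Prod.fst (hfib (f b))
    dsimp only at h1
    have : b ∈ Finset.univ.filter (fun c => f' c = f b) := by
      rw [← h1]; simp
    simp only [Finset.mem_filter, Finset.mem_univ, true_and] at this
    exact this.symm
  have hgg : g = g' := by
    funext r
    have h1 := congrArg Prod.snd (hfib (g r))
    dsimp only at h1
    have : r ∈ Finset.univ.filter (fun c => g' c = g r) := by
      rw [← h1]; simp
    simp only [Finset.mem_filter, Finset.mem_univ, true_and] at this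
    exact this.symm
  subst hff; subst hgg
  rfl

noncomputable def callanEquiv : CallanSeq k n ≃ CData k n :=
  Equiv.ofBijective toData
    ⟨fun a b hab => by rw [← ofData_toData a, ← ofData_toData b, hab],
     fun x => ⟨ofData x, ofData_injective (ofData_toData (ofData x))⟩⟩

lemma callanEquiv_len (σ : CallanSeq k n) :
    σ.pairs.length = (callanEquiv σ).1.1 + 1 := by
  show σ.pairs.length = (toData σ).1.1 + 1
  simp only [toData]
  exact (Nat.succ_pred_eq_of_pos σ.length_pos).symm

end Callan

noncomputable def barredEquiv (k n : ℕ) :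
    BarredCallan k n ≃ Σ m : Fin (min n k + 1),
      Σ _t : Slice (Blue k) (Sum.inr ()) m.1 × Slice (Red n) (Sum.inr ()) m.1, Fin (m.1+1) :=
  (Equiv.sigmaCongr callanEquiv (fun σ => finCongr (callanEquiv_len σ))).trans
    (Equiv.sigmaAssoc (fun (m : Fin (min n k + 1))
      (_ : Slice (Blue k) (Sum.inr ()) m.1 × Slice (Red n) (Sum.inr ()) m.1) => Fin (m.1+1)))

/-- The number of barred Callan sequences of size `k × n` equals `C_n^{(-k-1)}`. -/
theorem card_barredCallan (k n : ℕ) :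
    Nat.card (BarredCallan k n) = cPolyBernoulli n k := by
  classical
  rw [Nat.card_congr (barredEquiv k n), natCard_sigma]
  have hterm : ∀ m : Fin (min n k + 1),
      Nat.card (Σ _t : Slice (Blue k) (Sum.inr ()) m.1 × Slice (Red n) (Sum.inr ()) m.1,
          Fin (m.1+1))
        = m.1.factorial * (m.1 + 1).factorial * stirling2 (n + 1) (m.1 + 1) *
            stirling2 (k + 1) (m.1 + 1) := by
    intro m
    rw [Nat.card_congr (Equiv.sigmaEquivProd _ _), Nat.card_prod, Nat.card_prod]
    have hb : Nat.card (Slice (Blue k) (Sum.inr ()) m.1)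
        = m.1.factorial * stirling2 (k + 1) (m.1 + 1) := by
      have h := card_slice (Blue k) (Sum.inr ()) m.1
      rw [show Fintype.card (Blue k) = k + 1 by simp] at h
      exact h
    have hr : Nat.card (Slice (Red n) (Sum.inr ()) m.1)
        = m.1.factorial * stirling2 (n + 1) (m.1 + 1) := by
      have h := card_slice (Red n) (Sum.inr ()) m.1
      rw [show Fintype.card (Red n) = n + 1 by simp] at h
      exact h
    rw [hb, hr, Nat.card_eq_fintype_card, Fintype.card_fin, Nat.factorial_succ]
    ring
  simp only [hterm]
  rw [cPolyBernoulli]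
  exact Fin.sum_univ_eq_sum_range (fun j => j.factorial * (j + 1).factorial *
    stirling2 (n + 1) (j + 1) * stirling2 (k + 1) (j + 1)) (min n k + 1)
end

section
/- For all n, k, m ≥ 0, the cardinality of the set of m-barred Callan sequences of size k × n equals the cardinality of the set of m-barred Callan sequences of size n × k, i.e., C_n^k(m) = C_k^n(m). -/
/-- A labelled bar: a blue bar with label in `{1, …, m}` (encoded by `Fin m`) or
a red bar with label in `{0, …, m}` (encoded by `Fin (m+1)`). -/
abbrev MBar (m : ℕ) := Fin m ⊕ Fin (m + 1)

/-- The numerical label of a bar: blue bar `j : Fin m` has label `j + 1`,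
red bar `j : Fin (m+1)` has label `j`. -/
def barLabel {m : ℕ} : MBar m → ℕ := Sum.elim (fun j => (j : ℕ) + 1) (fun j => (j : ℕ))

/-- An element of an `m`-barred Callan sequence: a labelled bar or a Callan pair. -/
abbrev MElem (k n m : ℕ) := MBar m ⊕ CPair k n

/-- An `m`-barred Callan sequence of size `k × n`: a sequence consisting of the `m` labelled
blue bars, the `m+1` labelled red bars (each appearing exactly once) and the Callan pairs of a
`k × n` Callan sequence, such that each blue bar with label `i` is immediately followed by a
bar with label strictly smaller than `i`, and each red bar with label `i` is immediately
followed either by a Callan pair or by a bar with label strictly greater than `i`. -/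
structure MBarred (k n m : ℕ) where
  word : List (MElem k n m)
  bars_unique : ∀ b : MBar m, ∃! i : Fin word.length, word.get i = Sum.inl b
  pairs_ne : word.filterMap Sum.getRight? ≠ []
  blue_nonempty : ∀ p ∈ word.filterMap Sum.getRight?, p.1.Nonempty
  red_nonempty : ∀ p ∈ word.filterMap Sum.getRight?, p.2.Nonempty
  blue_partition : ∀ b : Blue k, ∃! i : Fin (word.filterMap Sum.getRight?).length,
      b ∈ ((word.filterMap Sum.getRight?).get i).1
  red_partition : ∀ r : Red n, ∃! i : Fin (word.filterMap Sum.getRight?).length,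
      r ∈ ((word.filterMap Sum.getRight?).get i).2
  star_blue : (Sum.inr () : Blue k) ∈ ((word.filterMap Sum.getRight?).getLast pairs_ne).1
  star_red : (Sum.inr () : Red n) ∈ ((word.filterMap Sum.getRight?).getLast pairs_ne).2
  blue_bar_rule : ∀ (i : ℕ) (b : Fin m), word[i]? = some (Sum.inl (Sum.inl b)) →
      ∃ b' : MBar m, word[i+1]? = some (Sum.inl b') ∧ barLabel b' < (b : ℕ) + 1
  red_bar_rule : ∀ (i : ℕ) (r : Fin (m + 1)), word[i]? = some (Sum.inl (Sum.inr r)) →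
      (∃ p : CPair k n, word[i+1]? = some (Sum.inr p)) ∨
      (∃ b' : MBar m, word[i+1]? = some (Sum.inl b') ∧ (r : ℕ) < barLabel b')
section Aux

/-- Swap the two components of each Callan pair, leaving bars unchanged. -/
def swapElem {k n m : ℕ} : MElem k n m → MElem n k m := Sum.map id Prod.swap

@[simp] lemma swapElem_inl {k n m : ℕ} (b : MBar m) :
    (swapElem (Sum.inl b) : MElem n k m) = Sum.inl b := rfl

@[simp] lemma swapElem_inr {k n m : ℕ} (p : CPair k n) :
    (swapElem (Sum.inr p) : MElem n k m) = Sum.inr p.swap := rfl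

lemma swapElem_eq_inl {k n m : ℕ} {x : MElem k n m} {b : MBar m} :
    swapElem x = Sum.inl b ↔ x = Sum.inl b := by
  cases x <;> simp [swapElem]

lemma getLast_congr {α : Type*} {l l' : List α} (h : l = l') (hl : l ≠ []) (hl' : l' ≠ []) :
    l.getLast hl = l'.getLast hl' := by subst h; rfl

lemma getLast_map' {α β : Type*} (f : α → β) (l : List α) (h : l ≠ [])
    (h' : l.map f ≠ []) : (l.map f).getLast h' = f (l.getLast h) := by
  simp only [List.getLast_eq_getElem, List.getElem_map, List.length_map]

lemma filterMap_swap {k n m : ℕ} (w : List (MElem k n m)) :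
    (w.map swapElem).filterMap Sum.getRight? =
      (w.filterMap Sum.getRight?).map Prod.swap := by
  induction w with
  | nil => rfl
  | cons a l ih => cases a <;> simp [Sum.getRight?, ih, List.filterMap_cons]

lemma existsUnique_map_get {α β : Type*} (L : List α) (g : α → β) (P : β → Prop)
    (h : ∃! i : Fin L.length, P (g (L.get i))) :
    ∃! i : Fin (L.map g).length, P ((L.map g).get i) := by
  obtain ⟨i, hi, hu⟩ := h
  refine ⟨⟨i.1, by simpa using i.2⟩, by simpa using hi, ?_⟩
  intro j hj
  have hj2 : j.1 < L.length := by simpa using j.2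
  have := hu ⟨j.1, hj2⟩ (by simpa using hj)
  exact Fin.ext (by simpa using congrArg Fin.val this)

/-- Two `MBarred` structures with the same word are equal. -/
lemma MBarred.ext' {k n m : ℕ} {σ τ : MBarred k n m} (h : σ.word = τ.word) : σ = τ := by
  cases σ; cases τ; cases h; rfl

/-- The swap map on barred Callan sequences. -/
def swapMBarred {k n m : ℕ} (σ : MBarred k n m) : MBarred n k m where
  word := σ.word.map swapElem
  bars_unique := by
    intro b
    have := σ.bars_unique b
    have h := existsUnique_map_get σ.word swapElem (fun x => x = Sum.inl b) ?_
    · exact h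
    · obtain ⟨i, hi, hu⟩ := this
      refine ⟨i, by show swapElem (σ.word.get i) = Sum.inl b; rw [swapElem_eq_inl]; exact hi, ?_⟩
      intro j hj
      exact hu j (swapElem_eq_inl.mp hj)
  pairs_ne := by
    rw [filterMap_swap]
    simpa using σ.pairs_ne
  blue_nonempty := by
    intro p hp
    rw [filterMap_swap] at hp
    obtain ⟨q, hq, rfl⟩ := List.mem_map.mp hp
    exact σ.red_nonempty q hq
  red_nonempty := by
    intro p hp
    rw [filterMap_swap] at hp
    obtain ⟨q, hq, rfl⟩ := List.mem_map.mp hp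
    exact σ.blue_nonempty q hq
  blue_partition := by
    intro b
    rw [filterMap_swap]
    exact existsUnique_map_get _ Prod.swap (fun p => b ∈ p.1) (σ.red_partition b)
  red_partition := by
    intro r
    rw [filterMap_swap]
    exact existsUnique_map_get _ Prod.swap (fun p => r ∈ p.2) (σ.blue_partition r)
  star_blue := by
    have hne : (σ.word.filterMap Sum.getRight?).map Prod.swap ≠ [] := by
      simpa using σ.pairs_ne
    rw [getLast_congr (filterMap_swap σ.word) _ hne,
      getLast_map' Prod.swap _ σ.pairs_ne hne]
    exact σ.star_red
  star_red := by
    have hne : (σ.word.filterMap Sum.getRight?).map Prod.swap ≠ [] := by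
      simpa using σ.pairs_ne
    rw [getLast_congr (filterMap_swap σ.word) _ hne,
      getLast_map' Prod.swap _ σ.pairs_ne hne]
    exact σ.star_blue
  blue_bar_rule := by
    intro i b hb
    rw [List.getElem?_map] at hb
    have hb' : σ.word[i]? = some (Sum.inl (Sum.inl b)) := by
      cases hw : σ.word[i]? with
      | none => simp [hw] at hb
      | some x =>
        rw [hw] at hb
        simp only [Option.map_some] at hb
        rw [swapElem_eq_inl.mp (Option.some.inj hb)]
    obtain ⟨b', hb1, hb2⟩ := σ.blue_bar_rule i b hb'
    exact ⟨b', by rw [List.getElem?_map, hb1]; simp, hb2⟩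
  red_bar_rule := by
    intro i r hr
    rw [List.getElem?_map] at hr
    have hr' : σ.word[i]? = some (Sum.inl (Sum.inr r)) := by
      cases hw : σ.word[i]? with
      | none => simp [hw] at hr
      | some x =>
        rw [hw] at hr
        simp only [Option.map_some] at hr
        rw [swapElem_eq_inl.mp (Option.some.inj hr)]
    rcases σ.red_bar_rule i r hr' with ⟨p, hp⟩ | ⟨b', hb1, hb2⟩
    · exact Or.inl ⟨p.swap, by rw [List.getElem?_map, hp]; simp⟩
    · exact Or.inr ⟨b', by rw [List.getElem?_map, hb1]; simp, hb2⟩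

lemma swapMBarred_involutive {k n m : ℕ} (σ : MBarred k n m) :
    swapMBarred (swapMBarred σ) = σ := by
  apply MBarred.ext'
  show (σ.word.map swapElem).map swapElem = σ.word
  rw [List.map_map]
  convert List.map_id σ.word
  funext x
  cases x <;> simp

/-- The swap equivalence. -/
def swapEquiv (k n m : ℕ) : MBarred k n m ≃ MBarred n k m where
  toFun := swapMBarred
  invFun := swapMBarred
  left_inv := swapMBarred_involutive
  right_inv := swapMBarred_involutive

end Aux

/-- `C_n^k(m) = C_k^n(m)`: the number of `m`-barred Callan sequences of size `k × n`
equals the number of `m`-barred Callan sequences of size `n × k`. -/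
theorem mBarred_symm (n k m : ℕ) :
    Nat.card (MBarred k n m) = Nat.card (MBarred n k m) := by
  exact Nat.card_congr (swapEquiv k n m)
end

section
/- For all n, k ≥ 0, the number of 0-barred Callan sequences of size k × n equals the number of barred Callan sequences of size k × n, i.e., C_n^k(0) = C_n^k. -/
section Aux
variable {k n : ℕ}

lemma bar0_eq (b : MBar 0) : b = Sum.inr 0 := by
  rcases b with b | b
  · exact b.elim0
  · congr 1; exact Fin.ext (by omega)

lemma getLast_eq_of_eq {α : Type*} {l l' : List α} (h : l = l') (hne : l ≠ []) :
    l.getLast hne = l'.getLast (h ▸ hne) := by subst h; rfl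

@[simp] lemma fm_map (l : List (CPair k n)) :
    (l.map (Sum.inr : CPair k n → MElem k n 0)).filterMap Sum.getRight? = l := by
  induction l with
  | nil => rfl
  | cons a t ih => simp [Sum.getRight?, ih]

def mkWord (P : List (CPair k n)) (j : ℕ) : List (MElem k n 0) :=
  (P.take j).map Sum.inr ++ Sum.inl (Sum.inr 0) :: (P.drop j).map Sum.inr

lemma filterMap_mkWord (P : List (CPair k n)) (j : ℕ) :
    (mkWord P j).filterMap Sum.getRight? = P := by
  simp [mkWord, Sum.getRight?, List.filterMap_append, ← List.map_take, ← List.map_drop,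
    Function.comp_def]
  rw [List.filterMap_cons, Sum.getRight?_inl]; simp only [fm_map, List.take_append_drop]

lemma mkWord_length (P : List (CPair k n)) {j : ℕ} (hj : j ≤ P.length) :
    (mkWord P j).length = P.length + 1 := by
  simp [mkWord]; omega

lemma mkA_inl {A B : List (CPair k n)} {a : MBar 0} {i : ℕ} {x : MBar 0}
    (h : (A.map (Sum.inr : CPair k n → MElem k n 0) ++ Sum.inl a :: B.map Sum.inr)[i]? =
      some (Sum.inl x)) : i = A.length ∧ x = a := by
  induction A generalizing i with
  | nil =>
    cases i with
    | zero => simp_all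
    | succ d =>
      simp only [List.map_nil, List.nil_append, List.getElem?_cons_succ] at h
      have := List.mem_of_getElem? h
      simp at this
  | cons c A ih =>
    cases i with
    | zero => simp at h
    | succ d =>
      simp only [List.map_cons, List.cons_append, List.getElem?_cons_succ] at h
      obtain ⟨h1, h2⟩ := ih h
      exact ⟨by simp [h1], h2⟩

lemma mkWord_inl {P : List (CPair k n)} {j i : ℕ} (hj : j ≤ P.length) {x : MBar 0}
    (h : (mkWord P j)[i]? = some (Sum.inl x)) : i = j ∧ x = Sum.inr 0 := by
  have := mkA_inl h
  simpa [Nat.min_eq_left hj] using this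

lemma mkWord_getElem_self (P : List (CPair k n)) {j : ℕ} (hj : j ≤ P.length) :
    (mkWord P j)[j]? = some (Sum.inl (Sum.inr 0)) := by
  have hlen : ((P.take j).map (Sum.inr : CPair k n → MElem k n 0)).length = j := by
    simp [Nat.min_eq_left hj]
  rw [mkWord, List.getElem?_append_right (by omega), hlen]
  simp

lemma eq_map_fm {l : List (MElem k n 0)} (h : ∀ x ∈ l, x.isRight) :
    l = (l.filterMap Sum.getRight?).map Sum.inr := by
  induction l with
  | nil => rfl
  | cons a t ih =>
    rcases a with a | a
    · simpa using h _ List.mem_cons_self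
    · simp only [List.filterMap_cons, Sum.getRight?, List.map_cons]
      exact congrArg _ (ih fun x hx => h x (List.mem_cons_of_mem _ hx))

def mkM (σ : CallanSeq k n) (j : Fin σ.pairs.length) : MBarred k n 0 where
  word := mkWord σ.pairs j
  bars_unique := by
    intro b
    have hb := bar0_eq b
    subst hb
    have hj : (j : ℕ) ≤ σ.pairs.length := le_of_lt j.isLt
    have hlen : (j : ℕ) < (mkWord σ.pairs j).length := by
      rw [mkWord_length _ hj]; omega
    refine ⟨⟨j, hlen⟩, ?_, ?_⟩
    · have h := mkWord_getElem_self σ.pairs hj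
      rw [List.getElem?_eq_getElem hlen] at h
      simpa using h
    · intro i' h'
      have h2 : (mkWord σ.pairs j)[(i' : ℕ)]? = some (Sum.inl (Sum.inr 0)) := by
        rw [List.getElem?_eq_getElem i'.isLt]
        simpa using h'
      have := (mkWord_inl hj h2).1
      exact Fin.ext this
  pairs_ne := by rw [filterMap_mkWord]; exact σ.ne
  blue_nonempty := by rw [filterMap_mkWord]; exact σ.blue_nonempty
  red_nonempty := by rw [filterMap_mkWord]; exact σ.red_nonempty
  blue_partition := by rw [filterMap_mkWord]; exact σ.blue_partition
  red_partition := by rw [filterMap_mkWord]; exact σ.red_partition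
  star_blue := by rw [getLast_eq_of_eq (filterMap_mkWord σ.pairs j)]; exact σ.star_blue
  star_red := by rw [getLast_eq_of_eq (filterMap_mkWord σ.pairs j)]; exact σ.star_red
  blue_bar_rule := fun _ b _ => b.elim0
  red_bar_rule := by
    intro i r h
    have hj : (j : ℕ) ≤ σ.pairs.length := le_of_lt j.isLt
    have hi := (mkWord_inl hj h).1
    subst hi
    left
    refine ⟨σ.pairs[(j : ℕ)]'j.isLt, ?_⟩
    have hlen : ((σ.pairs.take (j : ℕ)).map (Sum.inr : CPair k n → MElem k n 0)).length
        = (j : ℕ) := by simp [Nat.min_eq_left hj]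
    rw [mkWord, List.getElem?_append_right (by omega), hlen]
    simp only [Nat.add_sub_cancel_left, List.getElem?_cons_succ]
    rw [List.drop_eq_getElem_cons j.isLt]
    simp
  
lemma MBarred.ext'_s5 {w1 w2 : MBarred k n 0} (h : w1.word = w2.word) : w1 = w2 := by
  cases w1; cases w2; cases h; rfl

lemma CallanSeq.ext'_s5 {s1 s2 : CallanSeq k n} (h : s1.pairs = s2.pairs) : s1 = s2 := by
  cases s1; cases s2; cases h; rfl

def toM (x : BarredCallan k n) : MBarred k n 0 := mkM x.1 x.2

lemma toM_inj : Function.Injective (toM (k := k) (n := n)) := by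
  rintro ⟨σ1, j1⟩ ⟨σ2, j2⟩ h
  have hw : mkWord σ1.pairs j1 = mkWord σ2.pairs j2 := congrArg MBarred.word h
  have hP : σ1.pairs = σ2.pairs := by
    rw [← filterMap_mkWord σ1.pairs j1, ← filterMap_mkWord σ2.pairs j2, hw]
  have hσ : σ1 = σ2 := CallanSeq.ext'_s5 hP
  subst hσ
  have hj : (j1 : ℕ) = (j2 : ℕ) := by
    have h1 : (mkWord σ1.pairs (j1 : ℕ))[(j1 : ℕ)]? = some (Sum.inl (Sum.inr 0)) :=
      mkWord_getElem_self _ (le_of_lt j1.isLt)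
    rw [hw] at h1
    exact (mkWord_inl (le_of_lt j2.isLt) h1).1
  rw [Fin.ext hj]

lemma toM_surj : Function.Surjective (toM (k := k) (n := n)) := by
  intro w
  obtain ⟨i, hi, huniq⟩ := w.bars_unique (Sum.inr 0)
  -- any inl in the word sits at position i
  have hkey : ∀ (t : ℕ) (x : MBar 0), w.word[t]? = some (Sum.inl x) → t = (i : ℕ) := by
    intro t x hx
    have hb := bar0_eq x
    subst hb
    obtain ⟨ht, hget⟩ := List.getElem?_eq_some_iff.mp hx
    have := huniq ⟨t, ht⟩ (by simpa using hget)
    exact congrArg Fin.val this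
  have hi? : w.word[(i : ℕ)]? = some (Sum.inl (Sum.inr 0)) := by
    rw [List.getElem?_eq_getElem i.isLt]
    simpa using hi
  have hred := w.red_bar_rule i 0 hi?
  obtain ⟨p, hp⟩ : ∃ p : CPair k n, w.word[(i : ℕ)+1]? = some (Sum.inr p) := by
    rcases hred with h | ⟨b', _, hb'⟩
    · exact h
    · have := bar0_eq b'
      subst this
      simp [barLabel] at hb'
  -- the decomposition of the word
  set L1 := (w.word.take i).filterMap Sum.getRight? with hL1
  set L2 := (w.word.drop ((i : ℕ)+1)).filterMap Sum.getRight? with hL2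
  have htake : w.word.take (i : ℕ) = L1.map Sum.inr := by
    apply eq_map_fm
    intro x hx
    obtain ⟨t, ht, hxx⟩ := List.getElem_of_mem hx
    rcases x with x | x
    · exfalso
      have hlt : t < (i : ℕ) := lt_of_lt_of_le ht (by simp)
      have : w.word[t]? = some (Sum.inl x) := by
        rw [List.getElem_take] at hxx
        rw [List.getElem?_eq_getElem (by
          have := i.isLt; omega), hxx]
      have := hkey t x this
      omega
    · rfl
  have hdrop : w.word.drop ((i : ℕ)+1) = L2.map Sum.inr := by
    apply eq_map_fm
    intro x hx
    obtain ⟨t, ht, hxx⟩ := List.getElem_of_mem hx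
    rcases x with x | x
    · exfalso
      rw [List.getElem_drop] at hxx
      have hlen : (i : ℕ) + 1 + t < w.word.length := by
        have : (w.word.drop ((i : ℕ)+1)).length = w.word.length - ((i : ℕ)+1) := List.length_drop
        omega
      have : w.word[(i : ℕ)+1+t]? = some (Sum.inl x) := by
        rw [List.getElem?_eq_getElem hlen, hxx]
      have := hkey _ x this
      omega
    · rfl
  have hword : w.word = L1.map Sum.inr ++ Sum.inl (Sum.inr 0) :: L2.map Sum.inr := by
    conv_lhs => rw [← List.take_append_drop (i : ℕ) w.word]
    rw [List.drop_eq_getElem_cons i.isLt, htake, hdrop]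
    have hg : w.word[(i : ℕ)] = Sum.inl (Sum.inr 0) := by simpa using hi
    rw [hg]
  have hfm : w.word.filterMap Sum.getRight? = L1 ++ L2 := by
    rw [hword]
    simp [List.filterMap_append, Sum.getRight?, Function.comp_def]
    rw [List.filterMap_cons, Sum.getRight?_inl]; simp only [fm_map]
  have hL2ne : L2 ≠ [] := by
    have h1 : (i : ℕ) + 1 < w.word.length := (List.getElem?_eq_some_iff.mp hp).1
    rw [hL2, List.drop_eq_getElem_cons h1]
    have : w.word[(i : ℕ)+1] = Sum.inr p := by
      have := List.getElem?_eq_getElem h1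
      rw [this] at hp
      exact Option.some_inj.mp hp
    rw [this]
    simp [Sum.getRight?]
  let σ : CallanSeq k n := ⟨w.word.filterMap Sum.getRight?, w.pairs_ne, w.blue_nonempty,
    w.red_nonempty, w.blue_partition, w.red_partition, w.star_blue, w.star_red⟩
  have hjlt : L1.length < σ.pairs.length := by
    show L1.length < (w.word.filterMap Sum.getRight?).length
    rw [hfm, List.length_append]
    have : 0 < L2.length := List.length_pos_iff.mpr hL2ne
    omega
  refine ⟨⟨σ, ⟨L1.length, hjlt⟩⟩, ?_⟩
  apply MBarred.ext'_s5
  show mkWord σ.pairs L1.length = w.word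
  have hpairs : σ.pairs = L1 ++ L2 := hfm
  rw [mkWord, hpairs, List.take_left, List.drop_left, hword]

end Aux


/-- `C_n^k(0) = C_n^k`: the number of `0`-barred Callan sequences of size `k × n` equals
the number of barred Callan sequences of size `k × n`. -/
theorem mBarred_zero (n k : ℕ) :
    Nat.card (MBarred k n 0) = Nat.card (BarredCallan k n) := by
  exact (Nat.card_eq_of_bijective toM ⟨toM_inj, toM_surj⟩).symm
end
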